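/- Let m ≥ 3 and γ ≥ 1 be reals, let N10 ≥ 1 and k10 ≥ 1 be reals with k10 ≤ N10^{5/6}, and set a6 = 8^6 · √(6!). Then for every real p with 1/log(m) ≤ p ≤ 1, the read-k error bound is at most the Kim–Vu error bound: log(2 · m^γ) · k10 / (2 p^{12} N10) ≤ a6² · ( log(m^{5+γ}) )^{12} · max{ N10^{−1/6}, (k10/N10)^{1/3} } / p. -/

import Mathlib

/-- Comparison of the read-k and Kim–Vu sparsifier accuracy bounds for 4-cliques:
for a graph with `m` edges, `N10` 4-cliques and at most `k10` 4-cliques sharing a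
common edge, with failure probability `δ = m ^ (-γ)`, the squared relative accuracy
guaranteed by the read-k bound (left) is at most the one guaranteed by the Kim–Vu
bound (right), where `a6 = 8 ^ 6 * √(6!)`. -/
theorem statement2 (m γ N10 k10 : ℝ) (hm : 3 ≤ m) (hγ : 1 ≤ γ)
    (hN : 1 ≤ N10) (hk1 : 1 ≤ k10) (hk : k10 ≤ N10 ^ ((5 : ℝ) / 6))
    (p : ℝ) (hp1 : 1 / Real.log m ≤ p) (hp2 : p ≤ 1) :
    Real.log (2 * m ^ γ) * k10 / (2 * p ^ 12 * N10) ≤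
      (8 ^ 6 * Real.sqrt (Nat.factorial 6 : ℝ)) ^ 2 * (Real.log (m ^ (5 + γ))) ^ 12 *
        max (N10 ^ (-(1 : ℝ) / 6)) ((k10 / N10) ^ ((1 : ℝ) / 3)) / p := by
  have hm0 : (0:ℝ) < m := by linarith
  set L := Real.log m with hLdef
  have hL : (1:ℝ) ≤ L := by
    rw [hLdef, show (1:ℝ) = Real.log (Real.exp 1) by rw [Real.log_exp]]
    exact Real.log_le_log (Real.exp_pos 1) (by linarith [Real.exp_one_lt_d9])
  have hL0 : (0:ℝ) < L := by linarith
  have hp0 : (0:ℝ) < p := lt_of_lt_of_le (by positivity) hp1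
  have hN0 : (0:ℝ) < N10 := by linarith
  have hk0 : (0:ℝ) < k10 := by linarith
  have hLp : (1:ℝ) ≤ L * p := by
    have := (div_le_iff₀ hL0).mp hp1
    linarith [this]
  -- k10 ≤ N10
  have hkN : k10 ≤ N10 := by
    have h56 : N10 ^ ((5:ℝ)/6) ≤ N10 := by
      nth_rewrite 2 [← Real.rpow_one N10]
      exact Real.rpow_le_rpow_of_exponent_le hN (by norm_num)
    linarith
  have hdiv1 : k10 / N10 ≤ 1 := (div_le_one hN0).mpr hkN
  have hM : k10 / N10 ≤ max (N10 ^ (-(1:ℝ) / 6)) ((k10 / N10) ^ ((1:ℝ) / 3)) := by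
    refine le_max_of_le_right ?_
    nth_rewrite 1 [← Real.rpow_one (k10 / N10)]
    exact Real.rpow_le_rpow_of_exponent_ge (by positivity) hdiv1 (by norm_num)
  -- log bounds
  have hlog2 : Real.log (2 * m ^ γ) ≤ (1 + γ) * L := by
    rw [Real.log_mul two_ne_zero (Real.rpow_pos_of_pos hm0 γ).ne', Real.log_rpow hm0]
    have h2 : Real.log 2 ≤ 1 := by linarith [Real.log_two_lt_d9]
    nlinarith [hγ, hL]
  have hlog5 : Real.log (m ^ ((5:ℝ) + γ)) = (5 + γ) * L := Real.log_rpow hm0 _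
  have hfact : ((Nat.factorial 6 : ℕ) : ℝ) = 720 := by norm_num [Nat.factorial]
  have hA : ((8:ℝ) ^ 6 * Real.sqrt 720) ^ 2 = 8 ^ 12 * 720 := by
    rw [mul_pow, Real.sq_sqrt (by norm_num : (720:ℝ) ≥ 0)]
    norm_num
  -- key scalar inequality
  have key : (1 + γ) * L * p ≤ 2 * ((8:ℝ) ^ 12 * 720) * (5 + γ) ^ 12 * L ^ 12 * p ^ 12 := by
    have h12 : (1:ℝ) + γ ≤ (5 + γ) ^ 12 :=
      le_trans (by linarith) (le_self_pow₀ (by linarith) (by norm_num))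
    have hB : (1:ℝ) + γ ≤ 2 * ((8:ℝ) ^ 12 * 720) * (5 + γ) ^ 12 := by
      nlinarith [h12]
    have hLp12 : L * p ≤ (L * p) ^ 12 := le_self_pow₀ hLp (by norm_num)
    have := mul_le_mul hB hLp12 (by nlinarith) (by positivity)
    calc (1 + γ) * L * p = (1 + γ) * (L * p) := by ring
      _ ≤ 2 * ((8:ℝ) ^ 12 * 720) * (5 + γ) ^ 12 * (L * p) ^ 12 := this
      _ = 2 * ((8:ℝ) ^ 12 * 720) * (5 + γ) ^ 12 * L ^ 12 * p ^ 12 := by ring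
  -- middle inequality
  have mid : (1 + γ) * L * k10 / (2 * p ^ 12 * N10) ≤
      (8:ℝ) ^ 12 * 720 * ((5 + γ) * L) ^ 12 * (k10 / N10) / p := by
    rw [div_le_div_iff₀ (by positivity) hp0]
    have keyk := mul_le_mul_of_nonneg_right key hk0.le
    have hEq : (8:ℝ) ^ 12 * 720 * ((5 + γ) * L) ^ 12 * (k10 / N10) * (2 * p ^ 12 * N10)
        = 2 * ((8:ℝ) ^ 12 * 720) * (5 + γ) ^ 12 * L ^ 12 * p ^ 12 * k10 := by
      field_simp
    rw [hEq]
    nlinarith [keyk]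
  calc Real.log (2 * m ^ γ) * k10 / (2 * p ^ 12 * N10)
      ≤ (1 + γ) * L * k10 / (2 * p ^ 12 * N10) := by
        have h := mul_le_mul_of_nonneg_right hlog2 hk0.le
        exact div_le_div_of_nonneg_right h (by positivity) |>.trans_eq rfl
    _ ≤ (8:ℝ) ^ 12 * 720 * ((5 + γ) * L) ^ 12 * (k10 / N10) / p := mid
    _ ≤ (8 ^ 6 * Real.sqrt (Nat.factorial 6 : ℝ)) ^ 2 * (Real.log (m ^ (5 + γ))) ^ 12 *
        max (N10 ^ (-(1 : ℝ) / 6)) ((k10 / N10) ^ ((1 : ℝ) / 3)) / p := by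
      rw [hlog5, hfact, hA]
      gcongr
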